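/- Let γ : I → ℝ³ be a unit-speed curve satisfying γ''(s) = q · (γ(s) × γ'(s)) with q ≠ 0. Then |γ(s)|² = (s + a₀)² + c₀² for some constants a₀ and c₀, where q²c₀² equals the constant squared curvature |γ''|². -/

import Mathlib

def dot3 (u v : Fin 3 → ℝ) : ℝ := ∑ i, u i * v i

lemma hasDerivAt_dot3 {u v : ℝ → Fin 3 → ℝ} {u' v' : Fin 3 → ℝ} {s : ℝ}
    (hu : HasDerivAt u u' s) (hv : HasDerivAt v v' s) :
    HasDerivAt (fun t => dot3 (u t) (v t)) (dot3 u' (v s) + dot3 (u s) v') s := by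
  have hui : ∀ i, HasDerivAt (fun t => u t i) (u' i) s := hasDerivAt_pi.1 hu
  have hvi : ∀ i, HasDerivAt (fun t => v t i) (v' i) s := hasDerivAt_pi.1 hv
  have h := (((hui 0).mul (hvi 0)).add ((hui 1).mul (hvi 1))).add ((hui 2).mul (hvi 2))
  have e : ∀ t, dot3 (u t) (v t) = u t 0 * v t 0 + u t 1 * v t 1 + u t 2 * v t 2 := by
    intro t; simp [dot3, Fin.sum_univ_three]
  simp only [e]
  refine h.congr_deriv ?_
  simp [dot3, Fin.sum_univ_three]; ring

/-- constancy helper -/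
lemma const_of_deriv_zero {f : ℝ → ℝ} {I : Set ℝ} (hconv : Convex ℝ I)
    (hf : ∀ x ∈ I, HasDerivAt f 0 x) {x y : ℝ} (hx : x ∈ I) (hy : y ∈ I) :
    f x = f y := by
  have key := hconv.norm_image_sub_le_of_norm_hasDerivWithin_le
    (C := 0) (f' := fun _ => (0:ℝ)) (fun z hz => (hf z hz).hasDerivWithinAt)
    (fun z _ => by simp) hy hx
  rw [zero_mul] at key
  have h0 : f x - f y = 0 := norm_le_zero_iff.1 key
  linarith

/-- For a unit-speed conformal trajectory of the radial field,
`|γ(s)|² = (s+a₀)² + c₀²` with `q² c₀²` the constant squared curvature. -/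
theorem stmt4 (I : Set ℝ) (hI : IsOpen I) (hconv : Convex ℝ I) (q : ℝ) (hq : q ≠ 0)
    (γ g g' : ℝ → (Fin 3 → ℝ))
    (hd1 : ∀ s ∈ I, HasDerivAt γ (g s) s)
    (hd2 : ∀ s ∈ I, HasDerivAt g (g' s) s)
    (hunit : ∀ s ∈ I, dot3 (g s) (g s) = 1)
    (heq : ∀ s ∈ I, g' s = q • crossProduct (γ s) (g s)) :
    ∃ a₀ c₀ : ℝ, (∀ s ∈ I, dot3 (γ s) (γ s) = (s + a₀) ^ 2 + c₀ ^ 2) ∧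
      (∀ s ∈ I, dot3 (g' s) (g' s) = q ^ 2 * c₀ ^ 2) := by
  rcases I.eq_empty_or_nonempty with rfl | ⟨s₀, hs₀⟩
  · exact ⟨0, 0, fun s hs => hs.elim, fun s hs => hs.elim⟩
  -- p s = ⟨γ s, g s⟩ has derivative 1 on I
  set p : ℝ → ℝ := fun s => dot3 (γ s) (g s) with hp
  have horth : ∀ s ∈ I, dot3 (γ s) (g' s) = 0 := by
    intro s hs
    rw [heq s hs]
    simp [dot3, Fin.sum_univ_three, cross_apply]
    ring
  have hpderiv : ∀ s ∈ I, HasDerivAt p 1 s := by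
    intro s hs
    have h := hasDerivAt_dot3 (hd1 s hs) (hd2 s hs)
    rwa [horth s hs, hunit s hs, add_zero] at h
  -- p s - s constant
  have hp1 : ∀ s ∈ I, HasDerivAt (fun t => p t - t) 0 s := by
    intro s hs
    have h := (hpderiv s hs).sub (hasDerivAt_id' s)
    rwa [sub_self] at h
  set a₀ : ℝ := p s₀ - s₀ with ha₀
  have hpval : ∀ s ∈ I, p s = s + a₀ := by
    intro s hs
    have := const_of_deriv_zero hconv hp1 hs hs₀
    linarith [this]
  -- F s = |γ s|² - (s+a₀)² constant
  set F : ℝ → ℝ := fun s => dot3 (γ s) (γ s) - (s + a₀) ^ 2 with hF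
  have hFderiv : ∀ s ∈ I, HasDerivAt F 0 s := by
    intro s hs
    have h1 := hasDerivAt_dot3 (hd1 s hs) (hd1 s hs)
    have h2 : HasDerivAt (fun t => (t + a₀) ^ 2) (2 * (s + a₀)) s := by
      have := ((hasDerivAt_id' s).add_const a₀).pow 2
      refine this.congr_deriv ?_; norm_num
    have h := h1.sub h2
    have e1 : dot3 (g s) (γ s) = dot3 (γ s) (g s) := by
      simp only [dot3, Fin.sum_univ_three]; ring
    have h3 : dot3 (γ s) (g s) = s + a₀ := hpval s hs
    have : dot3 (g s) (γ s) + dot3 (γ s) (g s) - 2 * (s + a₀) = 0 := by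
      rw [e1, h3]; ring
    rwa [this] at h
  have hFval : ∀ s ∈ I, F s = F s₀ := fun s hs => const_of_deriv_zero hconv hFderiv hs hs₀
  -- F s₀ ≥ 0 : it equals |γ×g|² at s₀
  have hlagrange : ∀ s ∈ I, dot3 (crossProduct (γ s) (g s)) (crossProduct (γ s) (g s))
      = dot3 (γ s) (γ s) * dot3 (g s) (g s) - p s ^ 2 := by
    intro s hs
    simp [dot3, Fin.sum_univ_three, cross_apply, hp]
    ring
  have hFnonneg : 0 ≤ F s₀ := by
    have h := hlagrange s₀ hs₀
    rw [hunit s₀ hs₀, mul_one, hpval s₀ hs₀] at h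
    have hnn : 0 ≤ dot3 (crossProduct (γ s₀) (g s₀)) (crossProduct (γ s₀) (g s₀)) := by
      simp only [dot3, Fin.sum_univ_three]
      nlinarith [mul_self_nonneg ((crossProduct (γ s₀)) (g s₀) 0),
        mul_self_nonneg ((crossProduct (γ s₀)) (g s₀) 1),
        mul_self_nonneg ((crossProduct (γ s₀)) (g s₀) 2)]
    simp only [hF]
    linarith [h, hnn]
  refine ⟨a₀, Real.sqrt (F s₀), ?_, ?_⟩
  · intro s hs
    have := hFval s hs
    have hsq := Real.sq_sqrt hFnonneg
    simp only [hF] at this hsq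
    linarith [this, hsq]
  · intro s hs
    have h := hlagrange s hs
    rw [hunit s hs, mul_one, hpval s hs] at h
    have hFs := hFval s hs
    simp only [hF] at hFs
    have hsq := Real.sq_sqrt hFnonneg
    rw [heq s hs]
    have e : dot3 (q • crossProduct (γ s) (g s)) (q • crossProduct (γ s) (g s))
        = q ^ 2 * dot3 (crossProduct (γ s) (g s)) (crossProduct (γ s) (g s)) := by
      simp [dot3, Fin.sum_univ_three]; ring
    rw [e, h, hsq]
    simp only [hF] at hFs ⊢
    rw [hFs]
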